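/- Let p be an odd prime and let P be the group with presentation P = ⟨a, b, c | a^{p²} = b^{p²} = c^{p} = 1, c = [b,a], [c,a] = [c,b] = 1⟩ (i.e. c is the commutator of b and a, and c is central). Then the automorphism group of P has order |Aut(P)| = p⁷(p² − 1)(p − 1). (Example 4.3.) -/

import Mathlib

open scoped commutatorElement

namespace Ex43

variable (p : ℕ)

/-- The model group: Heisenberg-like central extension. -/
@[ext]
structure H where
  x : ZMod (p ^ 2)
  y : ZMod (p ^ 2)
  z : ZMod p

namespace H

variable {p}

/-- Reduction mod p. -/
def bar : ZMod (p ^ 2) →+* ZMod p :=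
  ZMod.castHom (dvd_pow_self p two_ne_zero) _

instance : Mul (H p) := ⟨fun g h => ⟨g.x + h.x, g.y + h.y, g.z + h.z + bar g.y * bar h.x⟩⟩
instance : One (H p) := ⟨⟨0, 0, 0⟩⟩
instance : Inv (H p) := ⟨fun g => ⟨-g.x, -g.y, -g.z + bar g.y * bar g.x⟩⟩

@[simp] lemma mul_x (g h : H p) : (g * h).x = g.x + h.x := rfl
@[simp] lemma mul_y (g h : H p) : (g * h).y = g.y + h.y := rfl
@[simp] lemma mul_z (g h : H p) : (g * h).z = g.z + h.z + bar g.y * bar h.x := rfl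
@[simp] lemma one_x : (1 : H p).x = 0 := rfl
@[simp] lemma one_y : (1 : H p).y = 0 := rfl
@[simp] lemma one_z : (1 : H p).z = 0 := rfl
@[simp] lemma inv_x (g : H p) : (g⁻¹).x = -g.x := rfl
@[simp] lemma inv_y (g : H p) : (g⁻¹).y = -g.y := rfl
@[simp] lemma inv_z (g : H p) : (g⁻¹).z = -g.z + bar g.y * bar g.x := rfl

instance : Group (H p) where
  mul_assoc g h k := by ext <;> simp <;> ring
  one_mul g := by ext <;> simp
  mul_one g := by ext <;> simp
  inv_mul_cancel g := by ext <;> simp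

/-- the generator `a`. -/
def A : H p := ⟨1, 0, 0⟩
/-- the generator `b`. -/
def B : H p := ⟨0, 1, 0⟩
/-- the generator `c`. -/
def C : H p := ⟨0, 0, 1⟩

lemma pow_def (g : H p) (n : ℕ) :
    g ^ n = ⟨n * g.x, n * g.y, n * g.z + (n.choose 2 : ZMod p) * (bar g.y * bar g.x)⟩ := by
  induction n with
  | zero => ext <;> simp
  | succ n ih =>
    rw [pow_succ, ih]
    ext <;> simp [Nat.choose_succ_succ, Nat.choose_one_right] <;> push_cast <;> ring

lemma commutator_eq (g h : H p) :
    ⁅g, h⁆ = ⟨0, 0, bar g.y * bar h.x - bar h.y * bar g.x⟩ := by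
  show g * h * g⁻¹ * h⁻¹ = _
  ext <;> simp <;> ring

end H
end Ex43
namespace Ex43

def rels (p : ℕ) : Set (FreeGroup (Fin 3)) :=
  {FreeGroup.of (0 : Fin 3) ^ p ^ 2, FreeGroup.of (1 : Fin 3) ^ p ^ 2,
    FreeGroup.of (2 : Fin 3) ^ p,
    (FreeGroup.of (2 : Fin 3))⁻¹ * ⁅FreeGroup.of (1 : Fin 3), FreeGroup.of (0 : Fin 3)⁆,
    ⁅FreeGroup.of (2 : Fin 3), FreeGroup.of (0 : Fin 3)⁆,
    ⁅FreeGroup.of (2 : Fin 3), FreeGroup.of (1 : Fin 3)⁆}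

abbrev P (p : ℕ) := PresentedGroup (rels p)

section Main

variable {p : ℕ} [hp : Fact p.Prime]

instance : NeZero (p ^ 2) := ⟨pow_ne_zero 2 hp.out.ne_zero⟩
instance : Fact (1 < p) := ⟨hp.out.one_lt⟩
instance : Fact (1 < p ^ 2) := ⟨Nat.one_lt_pow two_ne_zero hp.out.one_lt⟩

open H

/- ### generic power lemmas -/

lemma pow_mod_eq {G : Type*} [Group G] (g : G) {n : ℕ} (h : g ^ n = 1) (m : ℕ) :
    g ^ (m % n) = g ^ m := by
  conv_rhs => rw [← Nat.div_add_mod m n, pow_add, pow_mul, h, one_pow, one_mul]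

lemma pow_val_add {G : Type*} [Group G] (g : G) {n : ℕ} [NeZero n] (h : g ^ n = 1)
    (u v : ZMod n) : g ^ (u + v).val = g ^ u.val * g ^ v.val := by
  rw [ZMod.val_add, pow_mod_eq g h, pow_add]

lemma pow_val_natCast {G : Type*} [Group G] (g : G) {n : ℕ} [NeZero n] (h : g ^ n = 1)
    (m : ℕ) : g ^ ((m : ZMod n)).val = g ^ m := by
  rw [ZMod.val_natCast, pow_mod_eq g h]

/- ### exponent of `H p` -/

lemma choose_sq_cast (hodd : Odd p) : (((p ^ 2).choose 2 : ℕ) : ZMod p) = 0 := by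
  obtain ⟨k, hk⟩ : 2 ∣ p ^ 2 - 1 := (Nat.Odd.sub_odd (hodd.pow) odd_one).two_dvd
  have h2 : (p ^ 2).choose 2 = p * (p * k) := by
    rw [Nat.choose_two_right, hk, Nat.mul_div_assoc _ ⟨k, rfl⟩,
      show 2 * k / 2 = k by omega, pow_two, mul_assoc]
  rw [h2]
  push_cast
  simp

lemma H_pow_sq (hodd : Odd p) (g : H p) : g ^ p ^ 2 = 1 := by
  rw [pow_def]
  ext <;> simp [ZMod.natCast_self, choose_sq_cast hodd] <;> push_cast <;> simp

lemma bar_eq (u : ZMod (p ^ 2)) : bar u = ((u.val : ℕ) : ZMod p) := by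
  rw [bar, ZMod.castHom_apply, ZMod.natCast_val]

@[simp] lemma A_x : (A : H p).x = 1 := rfl
@[simp] lemma A_y : (A : H p).y = 0 := rfl
@[simp] lemma A_z : (A : H p).z = 0 := rfl
@[simp] lemma B_x : (B : H p).x = 0 := rfl
@[simp] lemma B_y : (B : H p).y = 1 := rfl
@[simp] lemma B_z : (B : H p).z = 0 := rfl
@[simp] lemma C_x : (C : H p).x = 0 := rfl
@[simp] lemma C_y : (C : H p).y = 0 := rfl
@[simp] lemma C_z : (C : H p).z = 1 := rfl

lemma A_pow (n : ℕ) : (A : H p) ^ n = ⟨(n : ZMod (p ^ 2)), 0, 0⟩ := by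
  rw [pow_def]; ext <;> simp

lemma B_pow (n : ℕ) : (B : H p) ^ n = ⟨0, (n : ZMod (p ^ 2)), 0⟩ := by
  rw [pow_def]; ext <;> simp

lemma C_pow (n : ℕ) : (C : H p) ^ n = ⟨0, 0, (n : ZMod p)⟩ := by
  rw [pow_def]; ext <;> simp

lemma comm_BA : ⁅(B : H p), (A : H p)⁆ = (C : H p) := by
  rw [H.commutator_eq]; ext <;> simp

lemma C_pow_p : (C : H p) ^ p = 1 := by
  rw [C_pow]; ext <;> simp

lemma H_decomp (g : H p) : A ^ g.x.val * B ^ g.y.val * C ^ g.z.val = g := by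
  rw [A_pow, B_pow, C_pow]
  ext <;> simp [ZMod.natCast_val, ZMod.cast_id]

/- ### the presented group -/

/-- generator `a` of `P p`. -/
def pa : P p := PresentedGroup.of 0
/-- generator `b` of `P p`. -/
def pb : P p := PresentedGroup.of 1
/-- generator `c` of `P p`. -/
def pc : P p := PresentedGroup.of 2

lemma mk_rels_eq_one {r : FreeGroup (Fin 3)} (h : r ∈ rels p) :
    PresentedGroup.mk (rels p) r = 1 :=
  (QuotientGroup.eq_one_iff _).mpr (Subgroup.subset_normalClosure h)

lemma rel_a : (pa : P p) ^ p ^ 2 = 1 := by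
  have h := mk_rels_eq_one (p := p) (r := FreeGroup.of (0 : Fin 3) ^ p ^ 2) (by simp [rels])
  rw [map_pow] at h
  simpa [pa, PresentedGroup.of] using h

lemma rel_b : (pb : P p) ^ p ^ 2 = 1 := by
  have h := mk_rels_eq_one (p := p) (r := FreeGroup.of (1 : Fin 3) ^ p ^ 2) (by simp [rels])
  rw [map_pow] at h
  simpa [pb, PresentedGroup.of] using h

lemma rel_c : (pc : P p) ^ p = 1 := by
  have h := mk_rels_eq_one (p := p) (r := FreeGroup.of (2 : Fin 3) ^ p) (by simp [rels])
  rw [map_pow] at h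
  simpa [pc, PresentedGroup.of] using h

lemma rel_comm : ⁅(pb : P p), (pa : P p)⁆ = (pc : P p) := by
  have h := mk_rels_eq_one (p := p)
    (r := (FreeGroup.of (2 : Fin 3))⁻¹ * ⁅FreeGroup.of (1 : Fin 3), FreeGroup.of (0 : Fin 3)⁆)
    (by simp [rels])
  rw [map_mul, map_inv, map_commutatorElement] at h
  have h2 := inv_mul_eq_one.mp h
  simpa [pa, pb, pc, PresentedGroup.of] using h2.symm

lemma comm_ca : Commute (pc : P p) (pa : P p) := by
  have h := mk_rels_eq_one (p := p)
    (r := ⁅FreeGroup.of (2 : Fin 3), FreeGroup.of (0 : Fin 3)⁆) (by simp [rels])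
  rw [map_commutatorElement] at h
  exact commutatorElement_eq_one_iff_commute.mp h

lemma comm_cb : Commute (pc : P p) (pb : P p) := by
  have h := mk_rels_eq_one (p := p)
    (r := ⁅FreeGroup.of (2 : Fin 3), FreeGroup.of (1 : Fin 3)⁆) (by simp [rels])
  rw [map_commutatorElement] at h
  exact commutatorElement_eq_one_iff_commute.mp h

lemma ba_eq : (pb : P p) * pa = pc * pa * pb := by
  have h : (pb : P p) * pa * pb⁻¹ * pa⁻¹ = pc := rel_comm
  calc (pb : P p) * pa = (pb * pa * pb⁻¹ * pa⁻¹) * (pa * pb) := by group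
    _ = pc * (pa * pb) := by rw [h]
    _ = pc * pa * pb := by rw [mul_assoc]

lemma b_pow_a (n : ℕ) : (pb : P p) * pa ^ n = pc ^ n * pa ^ n * pb := by
  induction n with
  | zero => simp
  | succ n ih =>
    calc (pb : P p) * pa ^ (n + 1) = (pb * pa ^ n) * pa := by rw [pow_succ, mul_assoc]
      _ = pc ^ n * pa ^ n * (pb * pa) := by rw [ih]; group
      _ = pc ^ n * pa ^ n * (pc * pa * pb) := by rw [ba_eq]
      _ = pc ^ n * (pa ^ n * pc) * (pa * pb) := by group
      _ = pc ^ n * (pc * pa ^ n) * (pa * pb) := by rw [((comm_ca (p := p)).pow_right n).symm.eq]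
      _ = pc ^ (n + 1) * pa ^ (n + 1) * pb := by rw [pow_succ, pow_succ]; group

lemma b_pow_a_pow (m n : ℕ) : (pb : P p) ^ m * pa ^ n = pc ^ (m * n) * pa ^ n * pb ^ m := by
  induction m with
  | zero => simp
  | succ m ih =>
    calc (pb : P p) ^ (m + 1) * pa ^ n = pb ^ m * (pb * pa ^ n) := by
          rw [pow_succ]; group
      _ = pb ^ m * (pc ^ n * pa ^ n * pb) := by rw [b_pow_a]
      _ = (pb ^ m * pc ^ n) * pa ^ n * pb := by group
      _ = (pc ^ n * pb ^ m) * pa ^ n * pb := by rw [((comm_cb (p := p)).pow_pow n m).eq]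
      _ = pc ^ n * (pb ^ m * pa ^ n) * pb := by group
      _ = pc ^ n * (pc ^ (m * n) * pa ^ n * pb ^ m) * pb := by rw [ih]
      _ = pc ^ (n + m * n) * pa ^ n * pb ^ (m + 1) := by rw [pow_add, pow_succ]; group
      _ = pc ^ ((m + 1) * n) * pa ^ n * pb ^ (m + 1) := by
          rw [show (m + 1) * n = n + m * n by ring]

lemma mul_normal_form (x1 y1 z1 x2 y2 z2 : ℕ) :
    ((pa : P p) ^ x1 * pb ^ y1 * pc ^ z1) * (pa ^ x2 * pb ^ y2 * pc ^ z2)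
      = pa ^ (x1 + x2) * pb ^ (y1 + y2) * pc ^ (z1 + z2 + y1 * x2) := by
  have hca : ∀ i j : ℕ, Commute ((pc : P p) ^ i) (pa ^ j) := fun i j => comm_ca.pow_pow i j
  have hcb : ∀ i j : ℕ, Commute ((pc : P p) ^ i) (pb ^ j) := fun i j => comm_cb.pow_pow i j
  calc ((pa : P p) ^ x1 * pb ^ y1 * pc ^ z1) * (pa ^ x2 * pb ^ y2 * pc ^ z2)
      = pa ^ x1 * pb ^ y1 * (pc ^ z1 * pa ^ x2) * pb ^ y2 * pc ^ z2 := by group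
    _ = pa ^ x1 * pb ^ y1 * (pa ^ x2 * pc ^ z1) * pb ^ y2 * pc ^ z2 := by
        rw [(hca z1 x2).eq]
    _ = pa ^ x1 * (pb ^ y1 * pa ^ x2) * (pc ^ z1 * pb ^ y2) * pc ^ z2 := by group
    _ = pa ^ x1 * (pb ^ y1 * pa ^ x2) * (pb ^ y2 * pc ^ z1) * pc ^ z2 := by
        rw [(hcb z1 y2).eq]
    _ = pa ^ x1 * (pc ^ (y1 * x2) * pa ^ x2 * pb ^ y1) * (pb ^ y2 * pc ^ z1) * pc ^ z2 := by
        rw [b_pow_a_pow]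
    _ = (pa ^ x1 * pc ^ (y1 * x2)) * pa ^ x2 * (pb ^ y1 * pb ^ y2) * (pc ^ z1 * pc ^ z2) := by
        group
    _ = (pc ^ (y1 * x2) * pa ^ x1) * pa ^ x2 * (pb ^ y1 * pb ^ y2) * (pc ^ z1 * pc ^ z2) := by
        rw [(hca (y1 * x2) x1).symm.eq]
    _ = pc ^ (y1 * x2) * (pa ^ x1 * pa ^ x2) * (pb ^ y1 * pb ^ y2) * (pc ^ z1 * pc ^ z2) := by
        group
    _ = pc ^ (y1 * x2) * pa ^ (x1 + x2) * pb ^ (y1 + y2) * pc ^ (z1 + z2) := by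
        rw [← pow_add, ← pow_add, ← pow_add]
    _ = (pc ^ (y1 * x2) * pa ^ (x1 + x2)) * pb ^ (y1 + y2) * pc ^ (z1 + z2) := by group
    _ = (pa ^ (x1 + x2) * pc ^ (y1 * x2)) * pb ^ (y1 + y2) * pc ^ (z1 + z2) := by
        rw [(hca (y1 * x2) (x1 + x2)).eq]
    _ = pa ^ (x1 + x2) * (pc ^ (y1 * x2) * pb ^ (y1 + y2)) * pc ^ (z1 + z2) := by group
    _ = pa ^ (x1 + x2) * (pb ^ (y1 + y2) * pc ^ (y1 * x2)) * pc ^ (z1 + z2) := by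
        rw [(hcb (y1 * x2) (y1 + y2)).eq]
    _ = pa ^ (x1 + x2) * pb ^ (y1 + y2) * pc ^ (y1 * x2 + (z1 + z2)) := by
        rw [pow_add]; group
    _ = pa ^ (x1 + x2) * pb ^ (y1 + y2) * pc ^ (z1 + z2 + y1 * x2) := by
        rw [show y1 * x2 + (z1 + z2) = z1 + z2 + y1 * x2 by ring]

/- ### the homomorphism `H p →* P p` -/

/-- The natural map `H p → P p`. -/
def phi : H p →* P p where
  toFun g := pa ^ g.x.val * pb ^ g.y.val * pc ^ g.z.val
  map_one' := by simp
  map_mul' g h := by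
    show pa ^ (g.x + h.x).val * pb ^ (g.y + h.y).val
        * pc ^ (g.z + h.z + bar g.y * bar h.x).val = _
    rw [pow_val_add _ rel_a, pow_val_add _ rel_b, pow_val_add _ rel_c, pow_val_add _ rel_c]
    have hbar : (bar g.y * bar h.x : ZMod p) = ((g.y.val * h.x.val : ℕ) : ZMod p) := by
      rw [bar_eq, bar_eq]; push_cast; ring
    rw [hbar, pow_val_natCast _ rel_c, mul_normal_form, ← pow_add, ← pow_add, ← pow_add,
      ← pow_add]

@[simp] lemma phi_apply (g : H p) :
    phi g = pa ^ g.x.val * pb ^ g.y.val * pc ^ g.z.val := rfl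

/- ### the homomorphism `P p →* H p` -/

/-- images of the generators. -/
def fgen : Fin 3 → H p := ![A, B, C]

lemma rels_check (hodd : Odd p) :
    ∀ r ∈ rels p, FreeGroup.lift (fgen (p := p)) r = 1 := by
  intro r hr
  simp only [rels, Set.mem_insert_iff, Set.mem_singleton_iff] at hr
  rcases hr with rfl | rfl | rfl | rfl | rfl | rfl
  · rw [map_pow, FreeGroup.lift_apply_of]
    exact H_pow_sq hodd _
  · rw [map_pow, FreeGroup.lift_apply_of]
    exact H_pow_sq hodd _
  · rw [map_pow, FreeGroup.lift_apply_of]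
    show (C : H p) ^ p = 1
    exact C_pow_p
  · rw [map_mul, map_inv, map_commutatorElement, FreeGroup.lift_apply_of, FreeGroup.lift_apply_of,
      FreeGroup.lift_apply_of]
    show (C : H p)⁻¹ * ⁅(B : H p), (A : H p)⁆ = 1
    rw [comm_BA, inv_mul_cancel]
  · rw [map_commutatorElement, FreeGroup.lift_apply_of, FreeGroup.lift_apply_of]
    show ⁅(C : H p), (A : H p)⁆ = 1
    rw [H.commutator_eq]; ext <;> simp
  · rw [map_commutatorElement, FreeGroup.lift_apply_of, FreeGroup.lift_apply_of]
    show ⁅(C : H p), (B : H p)⁆ = 1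
    rw [H.commutator_eq]; ext <;> simp

/-- The natural map `P p → H p`. -/
def psi (hodd : Odd p) : P p →* H p := PresentedGroup.toGroup (rels_check hodd)

@[simp] lemma psi_pa (hodd : Odd p) : psi hodd (pa : P p) = A := PresentedGroup.toGroup.of _
@[simp] lemma psi_pb (hodd : Odd p) : psi hodd (pb : P p) = B := PresentedGroup.toGroup.of _
@[simp] lemma psi_pc (hodd : Odd p) : psi hodd (pc : P p) = C := PresentedGroup.toGroup.of _

lemma comp1 (hodd : Odd p) : (psi hodd).comp (phi (p := p)) = MonoidHom.id (H p) := by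
  apply MonoidHom.ext
  intro g
  simp only [MonoidHom.comp_apply, phi_apply, map_mul, map_pow, psi_pa, psi_pb, psi_pc,
    MonoidHom.id_apply]
  exact H_decomp g

lemma comp2 (hodd : Odd p) : (phi (p := p)).comp (psi hodd) = MonoidHom.id (P p) := by
  apply PresentedGroup.ext
  intro x
  fin_cases x
  · show phi (psi hodd pa) = pa
    rw [psi_pa, phi_apply]
    simp [ZMod.val_one]
  · show phi (psi hodd pb) = pb
    rw [psi_pb, phi_apply]
    simp [ZMod.val_one]
  · show phi (psi hodd pc) = pc
    rw [psi_pc, phi_apply]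
    simp [ZMod.val_one]

/-- The isomorphism `H p ≃* P p`. -/
def isoHP (hodd : Odd p) : H p ≃* P p :=
  MonoidHom.toMulEquiv phi (psi hodd) (comp1 hodd) (comp2 hodd)

end Main
end Ex43
namespace Ex43
section Aut

variable {p : ℕ} [hp : Fact p.Prime]
open H

/-- `H p` is finite. -/
instance : Finite (H p) :=
  Finite.of_equiv (ZMod (p ^ 2) × ZMod (p ^ 2) × ZMod p)
    ⟨fun t => ⟨t.1, t.2.1, t.2.2⟩, fun g => (g.x, g.y, g.z), fun _ => rfl, fun _ => rfl⟩

/-- The "determinant" attached to a candidate pair of images of the generators. -/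
def det2 (q : H p × H p) : ZMod p :=
  bar q.2.y * bar q.1.x - bar q.1.y * bar q.2.x

lemma comm_central (g h k : H p) : ⁅⁅g, h⁆, k⁆ = 1 := by
  rw [H.commutator_eq, H.commutator_eq]
  ext <;> simp

lemma rels_check2 (hodd : Odd p) (q : H p × H p) :
    ∀ r ∈ rels p, FreeGroup.lift (![q.1, q.2, ⁅q.2, q.1⁆] : Fin 3 → H p) r = 1 := by
  intro r hr
  simp only [rels, Set.mem_insert_iff, Set.mem_singleton_iff] at hr
  rcases hr with rfl | rfl | rfl | rfl | rfl | rfl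
  · rw [map_pow, FreeGroup.lift_apply_of]; exact H_pow_sq hodd _
  · rw [map_pow, FreeGroup.lift_apply_of]; exact H_pow_sq hodd _
  · rw [map_pow, FreeGroup.lift_apply_of]
    show (⁅q.2, q.1⁆ : H p) ^ p = 1
    rw [H.commutator_eq, pow_def]
    ext <;> simp
  · rw [map_mul, map_inv, map_commutatorElement, FreeGroup.lift_apply_of, FreeGroup.lift_apply_of,
      FreeGroup.lift_apply_of]
    show (⁅q.2, q.1⁆ : H p)⁻¹ * ⁅q.2, q.1⁆ = 1
    exact inv_mul_cancel _
  · rw [map_commutatorElement, FreeGroup.lift_apply_of, FreeGroup.lift_apply_of]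
    exact comm_central _ _ _
  · rw [map_commutatorElement, FreeGroup.lift_apply_of, FreeGroup.lift_apply_of]
    exact comm_central _ _ _

/-- The endomorphism of `H p` determined by a pair of images of the two generators. -/
def endo (hodd : Odd p) (q : H p × H p) : H p →* H p :=
  (PresentedGroup.toGroup (rels_check2 hodd q)).comp phi

lemma endo_apply (hodd : Odd p) (q : H p × H p) (g : H p) :
    endo hodd q g = q.1 ^ g.x.val * q.2 ^ g.y.val * ⁅q.2, q.1⁆ ^ g.z.val := by
  simp [endo, phi_apply, map_mul, map_pow, pa, pb, pc]

lemma bar_det2 (q : H p × H p) :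
    det2 q = bar (q.1.x * q.2.y - q.1.y * q.2.x) := by
  simp only [det2, map_sub, map_mul]
  ring

lemma isUnit_lift {u : ZMod (p ^ 2)} (h : IsUnit (bar u)) : IsUnit u := by
  have hval : IsUnit ((u.val : ZMod p)) := by rwa [bar_eq] at h
  have hcop : u.val.Coprime p := (ZMod.isUnit_iff_coprime _ _).mp hval
  have h2 : IsUnit ((u.val : ZMod (p ^ 2))) :=
    (ZMod.isUnit_iff_coprime _ _).mpr (hcop.pow_right 2)
  rwa [ZMod.natCast_val, ZMod.cast_id] at h2

lemma endo_injective (hodd : Odd p) (q : H p × H p) (h : IsUnit (det2 q)) :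
    Function.Injective (endo hodd q) := by
  rw [injective_iff_map_eq_one]
  intro g hg
  rw [endo_apply] at hg
  have hD : IsUnit (q.1.x * q.2.y - q.1.y * q.2.x) :=
    isUnit_lift (by rw [← bar_det2]; exact h)
  have hx := congrArg H.x hg
  have hy := congrArg H.y hg
  simp only [pow_def, H.commutator_eq, mul_x, mul_y, one_x, one_y, ZMod.natCast_val,
    ZMod.cast_id, mul_zero, add_zero, mul_one, zero_add, mul_zero, zero_mul] at hx hy
  -- hx : g.x * q.1.x + g.y * q.2.x = 0,  hy : g.x * q.1.y + g.y * q.2.y = 0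
  have hgx : g.x = 0 := by
    have h0 : g.x * (q.1.x * q.2.y - q.1.y * q.2.x)
        = (g.x * q.1.x + g.y * q.2.x) * q.2.y - (g.x * q.1.y + g.y * q.2.y) * q.2.x := by ring
    rw [hx, hy] at h0
    simp only [zero_mul, sub_zero, sub_self] at h0
    exact (hD.mul_left_eq_zero).mp h0
  have hgy : g.y = 0 := by
    have h0 : g.y * (q.1.x * q.2.y - q.1.y * q.2.x)
        = (g.x * q.1.y + g.y * q.2.y) * q.1.x - (g.x * q.1.x + g.y * q.2.x) * q.1.y := by ring
    rw [hx, hy] at h0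
    simp only [zero_mul, sub_zero, sub_self] at h0
    exact (hD.mul_left_eq_zero).mp h0
  have hz := congrArg H.z hg
  rw [hgx, hgy] at hz
  simp only [pow_def, H.commutator_eq, mul_z, mul_x, mul_y, one_z, ZMod.natCast_val,
    ZMod.cast_id, ZMod.val_zero, Nat.cast_zero, zero_mul, mul_zero, add_zero, zero_add,
    map_zero, mul_one, sub_zero, Nat.choose_self] at hz
  -- hz should reduce to `g.z * det2 q = 0` in some shape
  have hgz : g.z = 0 := by
    have h0 : g.z * det2 q = 0 := by
      rw [det2]
      simpa using hz
    exact (h.mul_left_eq_zero).mp h0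
  ext
  · rw [hgx]; rfl
  · rw [hgy]; rfl
  · rw [hgz]; rfl

/-- The automorphism of `H p` determined by an admissible pair. -/
noncomputable def autOf (hodd : Odd p) (q : H p × H p) (h : IsUnit (det2 q)) : MulAut (H p) :=
  MulEquiv.ofBijective (endo hodd q)
    (Finite.injective_iff_bijective.mp (endo_injective hodd q h))

lemma autOf_apply (hodd : Odd p) (q : H p × H p) (h : IsUnit (det2 q)) (g : H p) :
    autOf hodd q h g = endo hodd q g := rfl

lemma C_ne_one : (C : H p) ≠ 1 := by
  intro h
  have := congrArg H.z h
  simp only [C_z, one_z] at this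
  exact one_ne_zero this

/-- Automorphisms of `H p` biject with admissible pairs. -/
noncomputable def autEquiv (hodd : Odd p) :
    MulAut (H p) ≃ {q : H p × H p // IsUnit (det2 q)} where
  toFun f := ⟨(f A, f B), by
    have hC : f C = ⟨0, 0, det2 (f A, f B)⟩ := by
      rw [← comm_BA, map_commutatorElement, H.commutator_eq]
      rfl
    have hne : det2 (f A, f B) ≠ 0 := by
      intro h0
      apply C_ne_one (p := p)
      apply f.injective
      rw [hC, h0, map_one]
      rfl
    exact isUnit_iff_ne_zero.mpr hne⟩
  invFun s := autOf hodd s.1 s.2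
  left_inv f := by
    apply MulEquiv.ext
    intro g
    rw [autOf_apply, endo_apply]
    have hC : f C = ⁅f B, f A⁆ := by rw [← comm_BA, map_commutatorElement]
    calc (f A) ^ g.x.val * (f B) ^ g.y.val * ⁅f B, f A⁆ ^ g.z.val
        = f (A ^ g.x.val * B ^ g.y.val * C ^ g.z.val) := by
          rw [map_mul, map_mul, map_pow, map_pow, map_pow, hC]
      _ = f g := by rw [H_decomp]
  right_inv s := by
    apply Subtype.ext
    have h1 : autOf hodd s.1 s.2 A = s.1.1 := by
      rw [autOf_apply, endo_apply]
      simp [ZMod.val_one]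
    have h2 : autOf hodd s.1 s.2 B = s.1.2 := by
      rw [autOf_apply, endo_apply]
      simp [ZMod.val_one]
    rw [Prod.ext_iff]
    exact ⟨h1, h2⟩

lemma card_mulAut_H (hodd : Odd p) :
    Nat.card (MulAut (H p)) = Nat.card {q : H p × H p // IsUnit (det2 q)} :=
  Nat.card_congr (autEquiv hodd)

end Aut
end Ex43
namespace Ex43
section Count

variable {p : ℕ} [hp : Fact p.Prime]
open H

/-- recombine digits mod `p` into `ZMod (p^2)`. -/
def join (a b : ZMod p) : ZMod (p ^ 2) := ((a.val + p * b.val : ℕ) : ZMod (p ^ 2))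

lemma join_lt (a b : ZMod p) : a.val + p * b.val < p ^ 2 := by
  have h2 : b.val + 1 ≤ p := b.val_lt
  calc a.val + p * b.val < p + p * b.val := Nat.add_lt_add_right a.val_lt _
    _ = p * (b.val + 1) := by ring
    _ ≤ p * p := Nat.mul_le_mul_left p h2
    _ = p ^ 2 := (pow_two p).symm

lemma join_val (a b : ZMod p) : (join a b).val = a.val + p * b.val := by
  rw [join, ZMod.val_natCast_of_lt (join_lt a b)]

@[simp] lemma bar_join (a b : ZMod p) : bar (join a b) = a := by
  rw [join, map_natCast]
  push_cast
  simp [ZMod.natCast_self, ZMod.natCast_val, ZMod.cast_id]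

/-- `ZMod (p^2)` splits as two digits. -/
def split2 : ZMod (p ^ 2) ≃ ZMod p × ZMod p where
  toFun u := (bar u, ((u.val / p : ℕ) : ZMod p))
  invFun ab := join ab.1 ab.2
  left_inv u := by
    have hu : u.val < p ^ 2 := u.val_lt
    show join (bar u) _ = u
    rw [join, bar_eq, ZMod.val_natCast, ZMod.val_natCast,
      Nat.mod_eq_of_lt (Nat.div_lt_of_lt_mul (by rwa [← pow_two])), Nat.mod_add_div]
    simp [ZMod.natCast_val, ZMod.cast_id]
  right_inv ab := by
    have ha : ab.1.val < p := ab.1.val_lt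
    ext
    · exact bar_join _ _
    · show (((join ab.1 ab.2).val / p : ℕ) : ZMod p) = ab.2
      rw [join_val, Nat.add_mul_div_left _ _ hp.out.pos, Nat.div_eq_of_lt ha, zero_add]
      simp [ZMod.natCast_val, ZMod.cast_id]

@[simp] lemma split2_snd_join (a b : ZMod p) : (split2 (join a b)).2 = b :=
  congrArg Prod.snd (split2.right_inv (a, b))

@[simp] lemma join_split (u : ZMod (p ^ 2)) : join (bar u) (split2 u).2 = u :=
  split2.left_inv u

/-- Admissible pairs biject with (invertible 2×2 matrix mod p) × six extra digits. -/
def pairEquiv : {q : H p × H p // IsUnit (det2 q)} ≃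
    ({M : Matrix (Fin 2) (Fin 2) (ZMod p) // IsUnit M.det} ×
      (ZMod p × ZMod p × ZMod p × ZMod p × ZMod p × ZMod p)) where
  toFun s :=
    (⟨!![bar s.1.1.x, bar s.1.1.y; bar s.1.2.x, bar s.1.2.y], by
        rw [Matrix.det_fin_two_of,
          show bar s.1.1.x * bar s.1.2.y - bar s.1.1.y * bar s.1.2.x = det2 s.1 by
            rw [det2]; ring]
        exact s.2⟩,
      ((split2 s.1.1.x).2, (split2 s.1.1.y).2, (split2 s.1.2.x).2, (split2 s.1.2.y).2,
        s.1.1.z, s.1.2.z))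
  invFun t :=
    ⟨(⟨join (t.1.1 0 0) t.2.1, join (t.1.1 0 1) t.2.2.1, t.2.2.2.2.2.1⟩,
      ⟨join (t.1.1 1 0) t.2.2.2.1, join (t.1.1 1 1) t.2.2.2.2.1, t.2.2.2.2.2.2⟩), by
        have hdet := t.1.2
        rw [Matrix.det_fin_two] at hdet
        rw [det2]
        simp only [bar_join]
        rw [show t.1.1 1 1 * t.1.1 0 0 - t.1.1 0 1 * t.1.1 1 0
            = t.1.1 0 0 * t.1.1 1 1 - t.1.1 0 1 * t.1.1 1 0 by ring]
        exact hdet⟩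
  left_inv s := by
    obtain ⟨⟨g1, g2⟩, hq⟩ := s
    apply Subtype.ext
    dsimp only
    refine Prod.ext ?_ ?_ <;> apply H.ext <;>
      simp [Matrix.cons_val_zero, Matrix.cons_val_one, Matrix.head_cons]
  right_inv t := by
    obtain ⟨⟨M, hM⟩, e1, e2, e3, e4, w1, w2⟩ := t
    refine Prod.ext (Subtype.ext ?_) ?_
    · dsimp only
      ext i j
      fin_cases i <;> fin_cases j <;> simp
    · dsimp only
      simp [Prod.ext_iff]

/-- invertible matrices as a subtype biject with `GL`. -/
noncomputable def glEquiv : {M : Matrix (Fin 2) (Fin 2) (ZMod p) // IsUnit M.det} ≃ GL (Fin 2) (ZMod p) where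
  toFun m := ((Matrix.isUnit_iff_isUnit_det m.1).mpr m.2).unit
  invFun u := ⟨u.1, (Matrix.isUnit_iff_isUnit_det _).mp u.isUnit⟩
  left_inv m := Subtype.ext (IsUnit.unit_spec ((Matrix.isUnit_iff_isUnit_det m.1).mpr m.2))
  right_inv u := Units.ext (IsUnit.unit_spec
    ((Matrix.isUnit_iff_isUnit_det u.1).mpr ((Matrix.isUnit_iff_isUnit_det u.1).mp u.isUnit)))

lemma card_pairs :
    Nat.card {q : H p × H p // IsUnit (det2 q)}
      = (p ^ 2 - 1) * (p ^ 2 - p) * p ^ 6 := by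
  rw [Nat.card_congr (pairEquiv (p := p)), Nat.card_prod,
    Nat.card_congr (glEquiv (p := p)), Matrix.card_GL_field]
  simp only [Nat.card_prod, Nat.card_zmod, Fin.prod_univ_two, ZMod.card, Fin.val_zero,
    Fin.val_one, pow_zero, pow_one]
  ring

end Count

/-- Transport of automorphism groups along a `MulEquiv`. -/
def autCongr {M N : Type*} [Group M] [Group N] (e : M ≃* N) : MulAut M ≃* MulAut N where
  toFun f := (e.symm.trans f).trans e
  invFun f := (e.trans f).trans e.symm
  left_inv f := by ext x; simp
  right_inv f := by ext x; simp
  map_mul' f g := by ext x; simp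

end Ex43

theorem card_aut_example (p : ℕ) (hp : p.Prime) (hodd : Odd p) :
    Nat.card (MulAut (PresentedGroup
      ({FreeGroup.of (0 : Fin 3) ^ p ^ 2, FreeGroup.of (1 : Fin 3) ^ p ^ 2,
        FreeGroup.of (2 : Fin 3) ^ p,
        (FreeGroup.of (2 : Fin 3))⁻¹ * ⁅FreeGroup.of (1 : Fin 3), FreeGroup.of (0 : Fin 3)⁆,
        ⁅FreeGroup.of (2 : Fin 3), FreeGroup.of (0 : Fin 3)⁆,
        ⁅FreeGroup.of (2 : Fin 3), FreeGroup.of (1 : Fin 3)⁆} : Set (FreeGroup (Fin 3))))) =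
      p ^ 7 * (p ^ 2 - 1) * (p - 1) := by
  haveI : Fact p.Prime := ⟨hp⟩
  show Nat.card (MulAut (Ex43.P p)) = _
  rw [Nat.card_congr (Ex43.autCongr (Ex43.isoHP hodd).symm).toEquiv,
    Ex43.card_mulAut_H hodd, Ex43.card_pairs]
  have hps : p ^ 2 - p = p * (p - 1) := by
    cases p with
    | zero => simp
    | succ n => rw [pow_two]; simp [Nat.succ_sub_one, Nat.succ_mul, Nat.mul_succ]
  rw [hps]
  ring
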